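/- For a complex number E with |E| < 1, a k-th root F of E (so F^k = E), the k-th roots of unity ζ_j = exp(2πij/k) for j = 0,...,k-1, and a_j = 1 - ζ_j·F, and nonnegative integers n, r with 0 ≤ r ≤ k-1, the series identity holds: ∑_{q=0}^∞ C(n + r + k·q, n) · E^q = k^{-1} · F^{-r} · ∑_{j=0}^{k-1} ζ_j^{-r} · a_j^{-(n+1)}, where C(·,·) denotes the binomial coefficient. -/

import Mathlib

open Complex Finset

lemma rootsum (k : ℕ) (hk : 1 ≤ k) (t : ℤ) :
    ∑ j ∈ Finset.range k, Complex.exp (2 * Real.pi * Complex.I * j / k) ^ t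
      = if (k : ℤ) ∣ t then (k : ℂ) else 0 := by
  have hk0 : (k : ℂ) ≠ 0 := Nat.cast_ne_zero.mpr (by omega)
  have hω : ∀ j : ℕ, Complex.exp (2 * Real.pi * Complex.I * j / k) ^ t
      = Complex.exp (2 * Real.pi * Complex.I * t / k) ^ j := by
    intro j
    rw [← Complex.exp_int_mul, ← Complex.exp_nat_mul]
    congr 1
    field_simp
  simp only [hω]
  set w := Complex.exp (2 * Real.pi * Complex.I * t / k) with hw
  have hwk : w ^ k = 1 := by
    rw [hw, ← Complex.exp_nat_mul]
    have : (k : ℂ) * (2 * Real.pi * Complex.I * t / k) = t * (2 * Real.pi * Complex.I) := by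
      field_simp
    rw [this, Complex.exp_int_mul_two_pi_mul_I]
  by_cases hdvd : (k : ℤ) ∣ t
  · rw [if_pos hdvd]
    obtain ⟨s, hs⟩ := hdvd
    have hw1 : w = 1 := by
      rw [hw]
      have : 2 * Real.pi * Complex.I * t / k = s * (2 * Real.pi * Complex.I) := by
        rw [hs]; push_cast; field_simp
      rw [this, Complex.exp_int_mul_two_pi_mul_I]
    simp [hw1]
  · have hw1 : w ≠ 1 := by
      intro h
      rw [hw, Complex.exp_eq_one_iff] at h
      obtain ⟨m, hm⟩ := h
      apply hdvd
      refine ⟨m, ?_⟩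
      have : (t : ℂ) = k * m := by
        have h2 : (2:ℂ) * Real.pi * Complex.I ≠ 0 := by
          simp [Real.pi_ne_zero, Complex.I_ne_zero]
        field_simp at hm
        have h3 : (2:ℂ) * Real.pi * Complex.I * t = 2 * Real.pi * Complex.I * (k * m) := by
          linear_combination (2 * Real.pi * Complex.I) * hm
        exact mul_left_cancel₀ h2 h3
      exact_mod_cast this
    rw [geom_sum_eq hw1, hwk]
    simp [hdvd]

theorem statement0 (k : ℕ) (hk : 1 ≤ k) (E F : ℂ) (hE : ‖E‖ < 1)
    (hFk : F ^ k = E) (hF : ‖F‖ < 1) (hF0 : F ≠ 0)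
    (ζ a : ℕ → ℂ)
    (hζ : ∀ j, ζ j = Complex.exp (2 * Real.pi * Complex.I * j / k))
    (ha : ∀ j, a j = 1 - ζ j * F)
    (n r : ℕ) (hr : r ≤ k - 1) :
    ∑' q : ℕ, ((n + r + k * q).choose n : ℂ) * E ^ q
      = (k : ℂ)⁻¹ * F ^ (-(r : ℤ)) *
        ∑ j ∈ Finset.range k, ζ j ^ (-(r : ℤ)) * a j ^ (-((n : ℤ) + 1)) := by
  have hk0 : (k : ℂ) ≠ 0 := Nat.cast_ne_zero.mpr (by omega)
  have hζ0 : ∀ j, ζ j ≠ 0 := fun j => by rw [hζ]; exact Complex.exp_ne_zero _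
  have hζabs : ∀ j, ‖ζ j‖ = 1 := by
    intro j
    rw [hζ j]
    have : 2 * Real.pi * Complex.I * j / k = ((2 * Real.pi * j / k : ℝ) : ℂ) * Complex.I := by
      push_cast; ring
    rw [this, Complex.norm_exp_ofReal_mul_I]
  have habs : ∀ j, ‖ζ j * F‖ < 1 := by
    intro j; rw [norm_mul, hζabs, one_mul]; exact hF
  -- base HasSum for each j
  have hbase : ∀ j, HasSum (fun m : ℕ => ζ j ^ (-(r:ℤ)) * (((m + n).choose n : ℂ) * (ζ j * F) ^ m))
      (ζ j ^ (-(r:ℤ)) * a j ^ (-((n : ℤ) + 1))) := by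
    intro j
    have h1 := hasSum_choose_mul_geometric_of_norm_lt_one (𝕜 := ℂ) n (r := ζ j * F) (habs j)
    have h2 : a j ^ (-((n : ℤ) + 1)) = 1 / (1 - ζ j * F) ^ (n + 1) := by
      rw [ha j]
      rw [show -((n : ℤ) + 1) = -((n+1 : ℕ) : ℤ) by push_cast; ring, zpow_neg, zpow_natCast,
        one_div]
    rw [h2]
    exact h1.mul_left _
  have hS : HasSum (fun m : ℕ => ∑ j ∈ Finset.range k,
      ζ j ^ (-(r:ℤ)) * (((m + n).choose n : ℂ) * (ζ j * F) ^ m))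
      (∑ j ∈ Finset.range k, ζ j ^ (-(r:ℤ)) * a j ^ (-((n : ℤ) + 1))) :=
    hasSum_sum (fun j _ => hbase j)
  set S := ∑ j ∈ Finset.range k, ζ j ^ (-(r:ℤ)) * a j ^ (-((n : ℤ) + 1)) with hSdef
  -- rewrite the summand
  have hfun : (fun m : ℕ => ∑ j ∈ Finset.range k,
      ζ j ^ (-(r:ℤ)) * (((m + n).choose n : ℂ) * (ζ j * F) ^ m))
      = fun m : ℕ => ((m + n).choose n : ℂ) * F ^ m *
        (if (k : ℤ) ∣ (m : ℤ) - r then (k : ℂ) else 0) := by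
    funext m
    rw [← rootsum k hk ((m : ℤ) - r)]
    rw [Finset.mul_sum]
    refine Finset.sum_congr rfl fun j _ => ?_
    rw [← hζ j]
    rw [mul_pow]
    have : ζ j ^ ((m : ℤ) - r) = ζ j ^ (-(r:ℤ)) * ζ j ^ m := by
      rw [← zpow_natCast (ζ j) m, ← zpow_add₀ (hζ0 j)]
      congr 1; ring
    rw [this]
    ring
  rw [hfun] at hS
  -- reindex via q ↦ r + k * q
  have hinj : Function.Injective (fun q : ℕ => r + k * q) := by
    intro x y h; simp only at h; exact Nat.eq_of_mul_eq_mul_left (by omega) (Nat.add_left_cancel h)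
  have hzero : ∀ m ∉ Set.range (fun q : ℕ => r + k * q),
      ((m + n).choose n : ℂ) * F ^ m * (if (k : ℤ) ∣ (m : ℤ) - r then (k : ℂ) else 0) = 0 := by
    intro m hm
    rw [if_neg, mul_zero]
    rintro ⟨s, hs⟩
    have hs0 : 0 ≤ s := by
      by_contra hneg
      push_neg at hneg
      have hk1 : (1 : ℤ) ≤ k := by exact_mod_cast hk
      have hr1 : (r : ℤ) ≤ k - 1 := by
        have : (r : ℤ) ≤ (k : ℤ) - 1 := by
          have := hr; omega
        exact this
      nlinarith [Int.natCast_nonneg m, hs]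
    apply hm
    refine ⟨s.toNat, ?_⟩
    simp only
    have : (m : ℤ) = r + k * s := by omega
    have h2 : (m : ℤ) = r + k * s.toNat := by rw [Int.toNat_of_nonneg hs0]; exact this
    exact_mod_cast h2.symm
  have hS2 := (hinj.hasSum_iff hzero).mpr hS
  have hcomp : ((fun m => ((m + n).choose n : ℂ) * F ^ m *
      (if (k : ℤ) ∣ (m : ℤ) - r then (k : ℂ) else 0)) ∘ (fun q : ℕ => r + k * q))
      = fun q : ℕ => (k : ℂ) * F ^ r * (((n + r + k * q).choose n : ℂ) * E ^ q) := by
    funext q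
    simp only [Function.comp]
    rw [if_pos ⟨q, by push_cast; ring⟩]
    rw [show r + k * q + n = n + r + k * q by omega]
    rw [pow_add, pow_mul, hFk]
    ring
  rw [hcomp] at hS2
  have hc : (k : ℂ) * F ^ r ≠ 0 := mul_ne_zero hk0 (pow_ne_zero _ hF0)
  have hS3 := hS2.mul_left ((k : ℂ) * F ^ r)⁻¹
  simp only [← mul_assoc, inv_mul_cancel₀ hc, one_mul] at hS3
  rw [hS3.tsum_eq]
  rw [mul_inv, zpow_neg, zpow_natCast]
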